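/- Assume condition (PC): every linear functional on ℰ that is nonnegative on ℰ_⪰ is a moment functional. Assume also there are e ∈ ℰ and ε > 0 with e(x) ⪰ εI_q on 𝒳. Let Λ be a moment functional on ℰ, x₀ ∈ 𝒳, and Y a positive semidefinite Hermitian q×q matrix. Then there exists a representing measure μ of Λ with μ({x₀}) ⪰ Y if and only if tr(F(x₀)Y) ≤ Λ(F) for all F ∈ ℰ_⪰. -/

import Mathlib

open Matrix
open scoped ComplexOrder

variable {X : Type*} {q : ℕ}

private lemma trace_nonneg_of_psd {n : Type*} [Fintype n] {M : Matrix n n ℂ}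
    (hM : M.PosSemidef) : 0 ≤ M.trace := by
  obtain ⟨B, rfl⟩ : ∃ B : Matrix n n ℂ, _ = Bᴴ * B := by
    classical
    open scoped MatrixOrder in
    exact CStarAlgebra.nonneg_iff_eq_star_mul_self.mp hM.nonneg
  rw [Matrix.trace]
  refine Finset.sum_nonneg fun j _ => ?_
  simp only [Matrix.diag_apply, Matrix.mul_apply, Matrix.conjTranspose_apply]
  exact Finset.sum_nonneg fun i _ => star_mul_self_nonneg _

private lemma trace_mul_re_nonneg {n : Type*} [Fintype n] {A B : Matrix n n ℂ}
    (hA : A.PosSemidef) (hB : B.PosSemidef) : 0 ≤ (A * B).trace.re := by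
  obtain ⟨C, rfl⟩ : ∃ C : Matrix n n ℂ, _ = Cᴴ * C := by
    classical
    open scoped MatrixOrder in
    exact CStarAlgebra.nonneg_iff_eq_star_mul_self.mp hA.nonneg
  obtain ⟨D, rfl⟩ : ∃ D : Matrix n n ℂ, _ = Dᴴ * D := by
    classical
    open scoped MatrixOrder in
    exact CStarAlgebra.nonneg_iff_eq_star_mul_self.mp hB.nonneg
  have h1 : (Cᴴ * C * (Dᴴ * D)).trace = ((C * Dᴴ)ᴴ * (C * Dᴴ)).trace := by
    calc (Cᴴ * C * (Dᴴ * D)).trace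
        = ((Cᴴ * C * Dᴴ) * D).trace := by rw [← Matrix.mul_assoc]
      _ = (D * (Cᴴ * C * Dᴴ)).trace := Matrix.trace_mul_comm _ _
      _ = ((D * Cᴴ) * (C * Dᴴ)).trace := by rw [Matrix.mul_assoc Cᴴ, ← Matrix.mul_assoc D]
      _ = ((C * Dᴴ)ᴴ * (C * Dᴴ)).trace := by
          rw [Matrix.conjTranspose_mul, Matrix.conjTranspose_conjTranspose]
  rw [h1]
  have := trace_nonneg_of_psd (Matrix.posSemidef_conjTranspose_mul_self (C * Dᴴ))
  exact (Complex.le_def.mp this).1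

/-- `μ` is a (finitely atomic) representing measure of the linear functional `Λ`. -/
def IsRepMeasure (E : Submodule ℝ (X → Matrix (Fin q) (Fin q) ℂ)) (Λ : E →ₗ[ℝ] ℝ)
    (μ : X →₀ Matrix (Fin q) (Fin q) ℂ) : Prop :=
  (∀ x, (μ x).PosSemidef) ∧
    ∀ F : E, Λ F = μ.sum fun x M => (((F : X → Matrix (Fin q) (Fin q) ℂ) x) * M).trace.re

/-- Assume condition (PC):  every linear functional on `ℰ` that is nonnegative on `ℰ_⪰` is a
moment functional; and assume there are `e ∈ ℰ`, `ε > 0` with `e(x) ⪰ ε I` on `𝒳`.  Let `Λ` be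
a moment functional on `ℰ`, `x₀ ∈ 𝒳`, and `Y ⪰ 0`.  Then there is a representing measure `μ`
of `Λ` with `μ({x₀}) ⪰ Y` if and only if `tr(F(x₀) Y) ≤ Λ(F)` for all `F ∈ ℰ_⪰`. -/
theorem penumbra_mem_iff (E : Submodule ℝ (X → Matrix (Fin q) (Fin q) ℂ))
    (hfin : FiniteDimensional ℝ E)
    (hherm : ∀ F ∈ E, ∀ x, Matrix.IsHermitian (F x))
    (hPC : ∀ Λ' : E →ₗ[ℝ] ℝ,
      (∀ F : E, (∀ x, ((F : X → Matrix (Fin q) (Fin q) ℂ) x).PosSemidef) → 0 ≤ Λ' F) →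
      ∃ μ, IsRepMeasure E Λ' μ)
    (e : E) (ε : ℝ) (hε : 0 < ε)
    (he : ∀ x, (((e : X → Matrix (Fin q) (Fin q) ℂ) x) - ε • (1 : Matrix (Fin q) (Fin q) ℂ)).PosSemidef)
    (Λ : E →ₗ[ℝ] ℝ) (hΛ : ∃ μ, IsRepMeasure E Λ μ) (x₀ : X)
    (Y : Matrix (Fin q) (Fin q) ℂ) (hY : Y.PosSemidef) :
    (∃ μ, IsRepMeasure E Λ μ ∧ ((μ x₀) - Y).PosSemidef) ↔
      ∀ F : E, (∀ x, ((F : X → Matrix (Fin q) (Fin q) ℂ) x).PosSemidef) →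
        (((F : X → Matrix (Fin q) (Fin q) ℂ) x₀) * Y).trace.re ≤ Λ F := by
  constructor
  · rintro ⟨μ, ⟨hpsd, hrep⟩, hsub⟩ F hF
    rw [hrep F]
    have h1 : (((F : X → Matrix (Fin q) (Fin q) ℂ) x₀) * Y).trace.re
        ≤ (((F : X → Matrix (Fin q) (Fin q) ℂ) x₀) * μ x₀).trace.re := by
      have h2 := trace_mul_re_nonneg (hF x₀) hsub
      have h3 : ((F : X → Matrix (Fin q) (Fin q) ℂ) x₀) * (μ x₀ - Y)
          = ((F : X → Matrix (Fin q) (Fin q) ℂ) x₀) * μ x₀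
            - ((F : X → Matrix (Fin q) (Fin q) ℂ) x₀) * Y := by rw [mul_sub]
      rw [h3, Matrix.trace_sub, Complex.sub_re] at h2
      linarith
    refine h1.trans ?_
    by_cases hx : x₀ ∈ μ.support
    · exact Finset.single_le_sum (fun i _ => trace_mul_re_nonneg (hF i) (hpsd i)) hx
    · rw [Finsupp.notMem_support_iff.mp hx]
      simp only [mul_zero, Matrix.trace_zero, Complex.zero_re]
      exact Finset.sum_nonneg fun i _ => trace_mul_re_nonneg (hF i) (hpsd i)
  · intro hle
    set T : E →ₗ[ℝ] ℝ :=
      { toFun := fun F => (((F : X → Matrix (Fin q) (Fin q) ℂ) x₀) * Y).trace.re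
        map_add' := by
          intro F G
          simp [Submodule.coe_add, Pi.add_apply, add_mul, Matrix.trace_add, Complex.add_re]
        map_smul' := by
          intro r F
          simp [Submodule.coe_smul, Pi.smul_apply, Matrix.smul_mul, Matrix.trace_smul,
            Complex.real_smul, Complex.re_ofReal_mul] } with hT
    obtain ⟨μ', hpsd', hrep'⟩ := hPC (Λ - T) (fun F hF => by
      have := hle F hF
      simp only [LinearMap.sub_apply, hT, LinearMap.coe_mk, AddHom.coe_mk]
      linarith)
    refine ⟨μ' + Finsupp.single x₀ Y, ⟨?_, ?_⟩, ?_⟩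
    · intro x
      rw [Finsupp.add_apply]
      rcases eq_or_ne x x₀ with hx | hx
      · rw [hx, Finsupp.single_eq_same]
        exact (hpsd' x₀).add hY
      · rw [Finsupp.single_eq_of_ne' (Ne.symm hx), add_zero]
        exact hpsd' x
    · intro F
      have h0 : ∀ x : X, (((F : X → Matrix (Fin q) (Fin q) ℂ) x) *
          (0 : Matrix (Fin q) (Fin q) ℂ)).trace.re = 0 := by
        intro x; simp
      rw [Finsupp.sum_add_index' h0 (fun x M N => by
        simp [mul_add, Matrix.trace_add, Complex.add_re])]
      rw [Finsupp.sum_single_index (h0 x₀)]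
      have := hrep' F
      simp only [LinearMap.sub_apply, hT, LinearMap.coe_mk, AddHom.coe_mk] at this
      linarith
    · rw [Finsupp.add_apply, Finsupp.single_eq_same]
      simpa using hpsd' x₀
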